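/- Fix n ≥ 2. Let H be a type with an n-ary operation m : (Fin n → H) → H that is n-ary associative: for every x : Fin (2n−1) → H and every position i with 0 ≤ i ≤ n−1, the value of m on the n-tuple obtained from x by replacing the window (x i, …, x (i+n−1)) with the single entry m applied to that window is independent of i. Let V be a complex vector space, f : H → Module.End ℂ V with f y ≠ 0 for all y, and π : (Fin n → H) → ℂ an n-ary Schur-like factor such that the composition f (x 0) * f (x 1) * ⋯ * f (x (n−1)) equals π x • f (m x) for every x : Fin n → H. Then π satisfies the n-ary 2-cocycle conditions: for every x : Fin (2n−1) → H, the product π (w_i x) * π (c_i x) is independent of i ∈ {0,…,n−1}, where w_i x : Fin n → H is the window (x i, …, x (i+n−1)) and c_i x : Fin n → H is the tuple (x 0, …, x (i−1), m (w_i x), x (i+n), …, x (2n−2)). -/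

import Mathlib

/-- The window `(x i, …, x (i+n−1))` of a `(2n−1)`-tuple `x`, starting at position `i`. -/
def naryWindow {H : Type*} (n : ℕ) (x : Fin (2 * n - 1) → H) (i : Fin n) :
    Fin n → H :=
  fun j => x ⟨i.val + j.val, by have := i.2; have := j.2; omega⟩

/-- The `n`-tuple obtained from a `(2n−1)`-tuple `x` by replacing the window starting at
position `i` with the single entry `m` applied to that window:
`(x 0, …, x (i−1), m (x i, …, x (i+n−1)), x (i+n), …, x (2n−2))`. -/
def naryContract {H : Type*} (n : ℕ) (m : (Fin n → H) → H)
    (x : Fin (2 * n - 1) → H) (i : Fin n) : Fin n → H :=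
  fun j =>
    if j.val < i.val then x ⟨j.val, by have := j.2; omega⟩
    else if j.val = i.val then m (naryWindow n x i)
    else x ⟨j.val + n - 1, by have := j.2; omega⟩

private lemma ofFn_congr' {M : Type*} {k : ℕ} {g h : Fin k → M} (H : ∀ j, g j = h j) :
    List.ofFn g = List.ofFn h := by
  exact congrArg _ (funext H)

private lemma ofFn_prod_split {M : Type*} [Monoid M] (a b c k : ℕ) (h : a + b + c = k)
    (g : Fin k → M) :
    (List.ofFn g).prod =
      (List.ofFn (fun j : Fin a => g ⟨j.val, by omega⟩)).prod *
      (List.ofFn (fun j : Fin b => g ⟨a + j.val, by omega⟩)).prod *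
      (List.ofFn (fun j : Fin c => g ⟨a + b + j.val, by omega⟩)).prod := by
  subst h
  rw [List.ofFn_add, List.prod_append, List.ofFn_add, List.prod_append]
  rfl


/-- The `n`-ary Schur-like factor of an `n`-ary projective representation (with
nowhere-vanishing values of `f`) of an `n`-ary associative operation satisfies the
`n`-ary 2-cocycle conditions: `π (wᵢ x) * π (cᵢ x)` is independent of the position `i`. -/
theorem nary_projective_representation_factor_cocycle
    {H : Type*} {V : Type*} [AddCommGroup V] [Module ℂ V]
    (n : ℕ) (hn : 2 ≤ n)
    (m : (Fin n → H) → H)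
    (hassoc : ∀ (x : Fin (2 * n - 1) → H) (i i' : Fin n),
      m (naryContract n m x i) = m (naryContract n m x i'))
    (f : H → Module.End ℂ V) (hf : ∀ y : H, f y ≠ 0)
    (π : (Fin n → H) → ℂ)
    (hrep : ∀ x : Fin n → H, (List.ofFn (fun i => f (x i))).prod = π x • f (m x)) :
    ∀ (x : Fin (2 * n - 1) → H) (i i' : Fin n),
      π (naryWindow n x i) * π (naryContract n m x i)
        = π (naryWindow n x i') * π (naryContract n m x i') := by
  have key : ∀ (x : Fin (2 * n - 1) → H) (i : Fin n),
      (List.ofFn (fun j : Fin (2 * n - 1) => f (x j))).prod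
        = (π (naryWindow n x i) * π (naryContract n m x i))
            • f (m (naryContract n m x i)) := by
    intro x i
    have hi := i.2
    set w := naryWindow n x i with hw
    set c := naryContract n m x i with hc
    rw [ofFn_prod_split i.val n (n - 1 - i.val) (2 * n - 1) (by omega)]
    have hmid : (List.ofFn (fun j : Fin n =>
        f (x ⟨i.val + j.val, by omega⟩))).prod = π w • f (m w) := hrep w
    rw [hmid, mul_smul_comm, smul_mul_assoc]
    have hcsplit : (List.ofFn (fun j : Fin n => f (c j))).prod
        = (List.ofFn (fun j : Fin i.val => f (c ⟨j.val, by omega⟩))).prod *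
          (List.ofFn (fun j : Fin 1 => f (c ⟨i.val + j.val, by omega⟩))).prod *
          (List.ofFn (fun j : Fin (n - 1 - i.val) =>
            f (c ⟨i.val + 1 + j.val, by omega⟩))).prod :=
      ofFn_prod_split i.val 1 (n - 1 - i.val) n (by omega) _
    have hA : (List.ofFn (fun j : Fin i.val => f (c ⟨j.val, by omega⟩))).prod
        = (List.ofFn (fun j : Fin i.val => f (x ⟨j.val, by omega⟩))).prod := by
      refine congrArg _ (ofFn_congr' fun j => ?_)
      simp only [hc, naryContract]
      rw [if_pos (show (j : ℕ) < i.val from j.2)]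
    have hM : (List.ofFn (fun j : Fin 1 => f (c ⟨i.val + j.val, by omega⟩))).prod
        = f (m w) := by
      simp only [List.ofFn_succ, List.ofFn_zero, List.prod_cons, List.prod_nil, mul_one]
      simp only [hc, naryContract, Fin.val_zero, add_zero, lt_irrefl, if_false, if_pos rfl,
        if_true]
      rfl
    have hB : (List.ofFn (fun j : Fin (n - 1 - i.val) =>
          f (c ⟨i.val + 1 + j.val, by omega⟩))).prod
        = (List.ofFn (fun j : Fin (n - 1 - i.val) =>
          f (x ⟨i.val + n + j.val, by omega⟩))).prod := by
      refine congrArg _ (ofFn_congr' fun j => ?_)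
      simp only [hc, naryContract]
      rw [if_neg (by omega), if_neg (by omega)]
      exact congrArg f (congrArg x (Fin.ext
        (show i.val + 1 + j.val + n - 1 = i.val + n + j.val by omega)))
    have := hrep c
    rw [hcsplit, hA, hM, hB] at this
    rw [this, smul_smul]
  intro x i i'
  have h := (key x i).symm.trans (key x i')
  rw [hassoc x i' i] at h
  have hne := hf (m (naryContract n m x i))
  by_contra hne2
  apply hne
  have := sub_smul (π (naryWindow n x i) * π (naryContract n m x i))
    (π (naryWindow n x i') * π (naryContract n m x i')) (f (m (naryContract n m x i)))
  rw [h, sub_self] at this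
  rcases smul_eq_zero.mp this with h0 | h0
  · exact absurd (sub_eq_zero.mp h0) hne2
  · exact absurd h0 hne
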